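/- (Order preservation of Sparsegen routing) For every u ∈ ℝ^E, every real λ < 1, and all indices i, j ∈ {1,…,E}: if u_i ≥ u_j then the Sparsegen routing output p* = sparsegen(u, λ) satisfies p*_i ≥ p*_j, and if u_i = u_j then p*_i = p*_j. -/

import Mathlib

noncomputable section

/-- The probability simplex in `ℝ^E`. -/
def simplex (E : ℕ) : Set (EuclideanSpace ℝ (Fin E)) :=
  {p | (∀ i, 0 ≤ p i) ∧ ∑ i, p i = 1}

/-- The Sparsegen objective `g_{u,λ}(p) = ‖p − u‖₂² − λ‖p‖₂²`. -/
def sparsegenObj {E : ℕ} (u : EuclideanSpace ℝ (Fin E)) (lam : ℝ)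
    (p : EuclideanSpace ℝ (Fin E)) : ℝ :=
  ‖p - u‖ ^ 2 - lam * ‖p‖ ^ 2

lemma normsq_eq {E : ℕ} (x : EuclideanSpace ℝ (Fin E)) : ‖x‖ ^ 2 = ∑ k, (x k) ^ 2 := by
  rw [EuclideanSpace.norm_eq, Real.sq_sqrt (by positivity)]
  simp [Real.norm_eq_abs, sq_abs]

lemma sparsegenObj_eq {E : ℕ} (u : EuclideanSpace ℝ (Fin E)) (lam : ℝ)
    (x : EuclideanSpace ℝ (Fin E)) :
    sparsegenObj u lam x = ∑ k, (x k - u k) ^ 2 - lam * ∑ k, (x k) ^ 2 := by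
  unfold sparsegenObj
  rw [normsq_eq, normsq_eq]
  congr 2

lemma half_sum_normsq {E : ℕ} (a b : EuclideanSpace ℝ (Fin E)) :
    ‖(2:ℝ)⁻¹ • (a + b)‖ ^ 2 = (‖a‖ ^ 2 + ‖b‖ ^ 2) / 2 - ‖a - b‖ ^ 2 / 4 := by
  have hpar := parallelogram_law_with_norm ℝ a b
  have h2 : ‖(2:ℝ)⁻¹ • (a + b)‖ = (2:ℝ)⁻¹ * ‖a + b‖ := by
    rw [norm_smul]; norm_num
  nlinarith [norm_nonneg (a+b), norm_nonneg (a-b), norm_nonneg a, norm_nonneg b]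

/-- Order preservation of Sparsegen routing: for every `u ∈ ℝ^E`, `λ < 1` and all
indices `i, j`: if `u_i ≥ u_j` then the Sparsegen routing output `p*` (the unique
minimizer over the simplex) satisfies `p*_i ≥ p*_j`, and if `u_i = u_j` then
`p*_i = p*_j`. -/
theorem sparsegen_order_preserving (E : ℕ) (hE : 1 ≤ E)
    (u : EuclideanSpace ℝ (Fin E)) (lam : ℝ) (hlam : lam < 1)
    (p : EuclideanSpace ℝ (Fin E)) (hp : p ∈ simplex E)
    (hmin : IsMinOn (sparsegenObj u lam) (simplex E) p)
    (i j : Fin E) :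
    (u j ≤ u i → p j ≤ p i) ∧ (u i = u j → p i = p j) := by
  by_cases hij : i = j
  · subst hij; exact ⟨fun _ => le_refl _, fun _ => rfl⟩
  set σ : Equiv.Perm (Fin E) := Equiv.swap i j with hσ
  set q : EuclideanSpace ℝ (Fin E) := WithLp.toLp 2 (fun k => p (σ k)) with hqdef
  have hqapp : ∀ k, q k = p (σ k) := fun k => rfl
  have hσi : σ i = j := Equiv.swap_apply_left i j
  have hσj : σ j = i := Equiv.swap_apply_right i j
  have hq : q ∈ simplex E := by
    constructor
    · intro k; exact hp.1 (σ k)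
    · rw [show ∑ k, q k = ∑ k, p (σ k) from rfl]
      rw [Equiv.sum_comp σ (fun k => p k)]
      exact hp.2
  have hsum1 : ∑ k, (q k) ^ 2 = ∑ k, (p k) ^ 2 :=
    Equiv.sum_comp σ (fun k => (p k) ^ 2)
  have hsum2 : ∑ k, (q k - u k) ^ 2 = ∑ k, (p k - u (σ k)) ^ 2 := by
    rw [← Equiv.sum_comp σ (fun k => (p (σ k) - u k) ^ 2)]
    apply Finset.sum_congr rfl
    intro k _
    simp only [hqapp]
    rw [hσ, Equiv.swap_apply_self]
  have hcross : ∑ k, ((p k - u (σ k)) ^ 2 - (p k - u k) ^ 2)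
      = (p i - u (σ i)) ^ 2 - (p i - u i) ^ 2
        + ((p j - u (σ j)) ^ 2 - (p j - u j) ^ 2) := by
    apply Finset.sum_eq_add_of_mem i j (Finset.mem_univ i) (Finset.mem_univ j) hij
    intro k _ hk
    rw [hσ, Equiv.swap_apply_of_ne_of_ne (by tauto) (by tauto)]
    ring
  have hkey : sparsegenObj u lam q - sparsegenObj u lam p
      = 2 * (u i - u j) * (p i - p j) := by
    rw [sparsegenObj_eq, sparsegenObj_eq, hsum1, hsum2]
    have hdist : ∑ k, (p k - u (σ k)) ^ 2 - ∑ k, (p k - u k) ^ 2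
        = ∑ k, ((p k - u (σ k)) ^ 2 - (p k - u k) ^ 2) := by
      rw [Finset.sum_sub_distrib]
    rw [show (∑ k, (p k - u (σ k)) ^ 2 - lam * ∑ k, (p k)^2)
          - (∑ k, (p k - u k) ^ 2 - lam * ∑ k, (p k)^2)
        = ∑ k, (p k - u (σ k)) ^ 2 - ∑ k, (p k - u k) ^ 2 by ring, hdist, hcross, hσi, hσj]
    ring
  have hprod : 0 ≤ (u i - u j) * (p i - p j) := by
    have := hmin hq
    simp only [Set.mem_setOf_eq] at this
    nlinarith [this]
  have heqcase : u i = u j → p i = p j := by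
    intro huij
    have hgq : sparsegenObj u lam q = sparsegenObj u lam p := by
      have h0 : sparsegenObj u lam q - sparsegenObj u lam p = 0 := by
        rw [hkey, huij]; ring
      linarith
    set m : EuclideanSpace ℝ (Fin E) := (2:ℝ)⁻¹ • (p + q) with hmdef
    have hmapp : ∀ k, m k = (2:ℝ)⁻¹ * (p k + q k) := fun k => rfl
    have hm : m ∈ simplex E := by
      constructor
      · intro k
        rw [hmapp]
        have := hp.1 k
        have := hq.1 k
        positivity
      · have hms : ∑ k, m k = ∑ k, (2:ℝ)⁻¹ * (p k + q k) :=
          Finset.sum_congr rfl (fun k _ => hmapp k)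
        rw [hms, ← Finset.mul_sum, Finset.sum_add_distrib, hp.2, hq.2]
        norm_num
    have hmu : m - u = (2:ℝ)⁻¹ • ((p - u) + (q - u)) := by
      rw [hmdef]; module
    have hgm : sparsegenObj u lam m
        = (sparsegenObj u lam p + sparsegenObj u lam q) / 2
          - (1 - lam) * ‖p - q‖ ^ 2 / 4 := by
      unfold sparsegenObj
      rw [hmu, hmdef, half_sum_normsq, half_sum_normsq,
        show (p - u) - (q - u) = p - q from by abel]
      ring
    have hle := hmin hm
    simp only [Set.mem_setOf_eq] at hle
    have hnn : 0 ≤ ‖p - q‖ := norm_nonneg _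
    have hpq : p = q := by
      rw [hgm, hgq] at hle
      have hsq : (1 - lam) * ‖p - q‖ ^ 2 ≤ 0 := by linarith
      have hs : ‖p - q‖ ^ 2 ≤ 0 := by nlinarith [hsq]
      have hz2 : ‖p - q‖ ^ 2 = 0 := le_antisymm hs (sq_nonneg _)
      have hz : ‖p - q‖ = 0 := by
        have := sq_eq_zero_iff.mp hz2
        exact this
      have := norm_eq_zero.mp hz
      rwa [sub_eq_zero] at this
    have : p j = q j := by rw [hpq]
    rw [hqapp, hσj] at this
    exact this.symm
  constructor
  · intro hle
    rcases lt_or_eq_of_le hle with hlt | heq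
    · nlinarith [hprod]
    · exact le_of_eq (heqcase heq.symm).symm
  · exact heqcase
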